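/- If a mechanism ignores the valuations of k fixed sink agents and selects an alternative maximizing the sum of valuations of the remaining n−k agents, then the worst-case welfare loss over valuation profiles in (-M/2, M/2) is at least kM − ε for every ε > 0 (so the supremum of welfare loss is at least kM). -/

import Mathlib

open Finset

/-- a mechanism with `k` fixed sink agents has worst-case welfare
loss at least `k*M - ε` for every `ε > 0`. -/
theorem stmt_2 {n k : ℕ} {A : Type} [Fintype A] [Nonempty A]
    (hA : 2 ≤ Fintype.card A) (M : ℝ) (hM : 0 < M)
    (S : Finset (Fin n)) (hS : S.card = k) (hk1 : 1 ≤ k) (hkn : k < n)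
    (f : (Fin n → A → ℝ) → A)
    (hf : ∀ v : Fin n → A → ℝ, (∀ i a, v i a ∈ Set.Ioo (-(M/2)) (M/2)) →
        ∀ a : A, ∑ j ∈ Finset.univ \ S, v j a ≤ ∑ j ∈ Finset.univ \ S, v j (f v)) :
    ∀ ε > (0:ℝ), ∃ v : Fin n → A → ℝ,
      (∀ i a, v i a ∈ Set.Ioo (-(M/2)) (M/2)) ∧
      (Finset.univ.sup' Finset.univ_nonempty (fun a => ∑ i, v i a))
        - ∑ i, v i (f v) > k * M - ε := by
  classical
  intro ε hε
  have : Nontrivial A := Fintype.one_lt_card_iff_nontrivial.mp (by omega)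
  obtain ⟨a, b, hab⟩ := exists_pair_ne A
  set c : ℝ := ((n + k : ℕ) : ℝ)
  have hc0 : (0:ℝ) ≤ c := by positivity
  set d : ℝ := min (ε / (c + 1)) (M / 4) with hd_def
  have hd0 : 0 < d := lt_min (by positivity) (by linarith)
  have hdM : d < M / 2 := lt_of_le_of_lt (min_le_right _ _) (by linarith)
  have hcd : c * d < ε := by
    have h1 : d ≤ ε / (c + 1) := min_le_left _ _
    have h2 : c * (ε / (c + 1)) < ε := by
      rw [mul_div_assoc', div_lt_iff₀ (by linarith)]
      nlinarith
    nlinarith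
  set v : Fin n → A → ℝ := fun i x =>
    if i ∈ S then (if x = b then M/2 - d else -(M/2 - d))
    else (if x = a then d else 0) with hv_def
  have hrange : ∀ i x, v i x ∈ Set.Ioo (-(M/2)) (M/2) := by
    intro i x
    simp only [hv_def, Set.mem_Ioo]
    split <;> split <;> constructor <;> linarith
  -- sums over non-sinks
  have hcard : (Finset.univ \ S).card = n - k := by
    rw [Finset.card_sdiff_of_subset (Finset.subset_univ S), hS, Finset.card_univ, Fintype.card_fin]
  have hns : ∀ x : A, ∑ j ∈ Finset.univ \ S, v j x
      = if x = a then (n - k : ℕ) * d else 0 := by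
    intro x
    have : ∀ j ∈ Finset.univ \ S, v j x = if x = a then d else 0 := by
      intro j hj
      rw [Finset.mem_sdiff] at hj
      simp [hv_def, hj.2]
    rw [Finset.sum_congr rfl this, Finset.sum_const, hcard]
    split <;> simp [nsmul_eq_mul]
  have hsink : ∀ x : A, ∑ j ∈ S, v j x
      = if x = b then (k:ℝ) * (M/2 - d) else -((k:ℝ) * (M/2 - d)) := by
    intro x
    have : ∀ j ∈ S, v j x = if x = b then M/2 - d else -(M/2 - d) := by
      intro j hj; simp [hv_def, hj]
    rw [Finset.sum_congr rfl this, Finset.sum_const, hS]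
    split <;> simp [nsmul_eq_mul] <;> ring
  have htot : ∀ x : A, ∑ i, v i x = (∑ j ∈ Finset.univ \ S, v j x) + ∑ j ∈ S, v j x := by
    intro x
    rw [Finset.sum_sdiff (Finset.subset_univ S)]
  -- f v = a
  have hfa : f v = a := by
    by_contra h
    have := hf v hrange a
    rw [hns a, hns (f v), if_pos rfl, if_neg h] at this
    have hnk : 0 < ((n - k : ℕ) : ℝ) := by
      have : 0 < n - k := by omega
      exact_mod_cast this
    nlinarith
  -- bound
  have hsup : ∑ i, v i b ≤ Finset.univ.sup' Finset.univ_nonempty (fun x => ∑ i, v i x) :=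
    Finset.le_sup' (fun x => ∑ i, v i x) (Finset.mem_univ b)
  have hvb : ∑ i, v i b = (k:ℝ) * (M/2 - d) := by
    rw [htot, hns, hsink, if_neg (Ne.symm hab), if_pos rfl]; ring
  have hva : ∑ i, v i (f v) = (n - k : ℕ) * d - (k:ℝ) * (M/2 - d) := by
    rw [hfa, htot, hns, hsink, if_pos rfl, if_neg hab]; ring
  refine ⟨v, hrange, ?_⟩
  have hnk_le : ((n - k : ℕ) : ℝ) + 2 * (k:ℝ) = c := by
    have h : (n - k) + 2 * k = n + k := by omega
    calc ((n - k : ℕ) : ℝ) + 2 * (k:ℝ) = (((n - k) + 2 * k : ℕ) : ℝ) := by push_cast; ring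
      _ = c := by rw [h]
  have hcdeq : c * d = ((n - k : ℕ) : ℝ) * d + 2 * (k:ℝ) * d := by
    rw [← hnk_le]; ring
  have key : (k:ℝ) * (M/2 - d) - (((n - k : ℕ) : ℝ) * d - (k:ℝ) * (M/2 - d))
      = (k:ℝ) * M - c * d := by
    rw [hcdeq]; ring
  linarith [hsup, hvb, hva, key, hcd]
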